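/- Let z < -4/27 be real and let θ ∈ (2π/3, π) be the argument of the non-real root of 1 + t + z t^3 in the upper half-plane. Then z = 4cos²θ / (1 - 4cos²θ)^3. -/
import Mathlib


open Complex Real

/-- for `z < -4/27` with upper half-plane root `r e^{iθ}`,
`θ ∈ (2π/3, π)`, one has `z = 4cos²θ/(1 - 4cos²θ)³`. -/
theorem z_in_terms_of_theta (z r θ : ℝ) (hz : z < -4 / 27) (hr : 0 < r)
    (hθ : θ ∈ Set.Ioo (2 * π / 3) π)
    (hy : (z : ℂ) * (r * Complex.exp (θ * Complex.I)) ^ 3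
        + r * Complex.exp (θ * Complex.I) + 1 = 0) :
    z = 4 * Real.cos θ ^ 2 / (1 - 4 * Real.cos θ ^ 2) ^ 3 := by
  have he : Complex.exp (θ * Complex.I)
      = (Real.cos θ : ℂ) + (Real.sin θ : ℂ) * Complex.I := by
    rw [Complex.exp_mul_I, Complex.ofReal_cos, Complex.ofReal_sin]
  rw [he] at hy
  set c := Real.cos θ with hc
  set s := Real.sin θ with hs
  have h1 := congrArg Complex.re hy
  have h2 := congrArg Complex.im hy
  simp [Complex.add_re, Complex.add_im, Complex.mul_re, Complex.mul_im, pow_succ] at h1 h2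
  have hpi := Real.pi_pos
  have hsc : s ^ 2 + c ^ 2 = 1 := Real.sin_sq_add_cos_sq θ
  have hspos : 0 < s := Real.sin_pos_of_pos_of_lt_pi (by linarith [hθ.1]) hθ.2
  have hcneg : c < -1 / 2 := by
    have h23 : Real.cos (2 * π / 3) = -1 / 2 := by
      have : (2 : ℝ) * π / 3 = π - π / 3 := by ring
      rw [this, Real.cos_pi_sub, Real.cos_pi_div_three]; norm_num
    have := Real.cos_lt_cos_of_nonneg_of_le_pi (by positivity) (le_of_lt hθ.2) hθ.1
    linarith [this, h23.symm ▸ this]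
  -- imaginary part: z r² (4c²-1) + 1 = 0
  have hA : z * r ^ 2 * (4 * c ^ 2 - 1) + 1 = 0 := by
    have h20 : r * s * (z * r ^ 2 * (4 * c ^ 2 - 1) + 1) = 0 := by
      linear_combination h2 + z * r ^ 3 * s * hsc
    have hne : r * s ≠ 0 := by positivity
    exact (mul_eq_zero.mp h20).resolve_left hne
  -- real part: z r³ c (4c²-3) + r c + 1 = 0
  have hB : z * r ^ 3 * c * (4 * c ^ 2 - 3) + r * c + 1 = 0 := by
    linear_combination h1 + 3 * z * r ^ 3 * c * hsc
  have hC : 2 * c * z * r ^ 3 = 1 := by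
    linear_combination r * c * hA - hB
  have hzne : z ≠ 0 := by linarith
  have hrne : r ≠ 0 := ne_of_gt hr
  have hr2 : 2 * c * r = 1 - 4 * c ^ 2 := by
    have h0 : z * r ^ 2 * ((4 * c ^ 2 - 1) + 2 * c * r) = 0 := by
      linear_combination hA + hC
    have : (4 * c ^ 2 - 1) + 2 * c * r = 0 := by
      rcases mul_eq_zero.mp h0 with h | h
      · exact absurd h (by positivity)
      · exact h
    linarith
  have hden : ((1 : ℝ) - 4 * c ^ 2) ^ 3 ≠ 0 := by
    have : 4 * c ^ 2 > 1 := by nlinarith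
    intro h
    have := pow_eq_zero_iff (n := 3) (by norm_num) |>.mp h
    linarith
  rw [eq_div_iff hden]
  linear_combination 4 * c ^ 2 * hC -
    z * ((1 - 4 * c ^ 2) ^ 2 + (1 - 4 * c ^ 2) * (2 * c * r) + 4 * c ^ 2 * r ^ 2) * hr2
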